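/- Under the assumptions of the previous lemma (γ_t ≤ 1/L_t^g for t = 1,…,T), for the nudging operator α_t(x) = (x + γ_t∇log g_t(x))·1_{S_t}(x) + x·1_{S_t^c}(x) with S_t = {x : ‖∇log g_t(x)‖₂ ≥ 2L_t^τ}, the model evidence of the nudged model dominates that of the original model: ∫⋯∫ g_T(α_T(x_T)) ∏_{t=1}^{T−1} m_{t+1}(x_{t+1}|α_t(x_t)) g_t(α_t(x_t)) · m_1(x_1|x_0) m_0(x_0) dx_0⋯dx_T ≥ ∫⋯∫ g_T(x_T) ∏_{t=1}^{T−1} m_{t+1}(x_{t+1}|x_t) g_t(x_t) · m_1(x_1|x_0) m_0(x_0) dx_0⋯dx_T. -/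

import Mathlib

open MeasureTheory Finset InnerProductSpace RealInnerProductSpace
open Fin.NatCast

lemma descent_aux {d : ℕ} {f : EuclideanSpace ℝ (Fin d) → ℝ} (hf : Differentiable ℝ f)
    {L : ℝ}
    (hlip : ∀ p q, ‖gradient f p - gradient f q‖ ≤ L * ‖p - q‖)
    (x v : EuclideanSpace ℝ (Fin d)) :
    f x + ⟪gradient f x, v⟫_ℝ - L / 2 * ‖v‖ ^ 2 ≤ f (x + v) := by
  set c : ℝ → EuclideanSpace ℝ (Fin d) := fun s => x + s • v with hc
  have hcd : ∀ s : ℝ, HasDerivAt c v s := by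
    intro s
    have := (hasDerivAt_const s x).add ((hasDerivAt_id s).smul_const v)
    simp only [zero_add, one_smul] at this
    exact this
  have hfc : ∀ s : ℝ, HasDerivAt (fun s => f (c s)) ⟪gradient f (c s), v⟫_ℝ s := by
    intro s
    have h1 := ((hf (c s)).hasGradientAt.hasFDerivAt).comp_hasDerivAt s (hcd s)
    simp only [InnerProductSpace.toDual_apply_apply] at h1
    exact h1
  set φ : ℝ → ℝ := fun s => f (c s) - s * ⟪gradient f x, v⟫_ℝ + L / 2 * s ^ 2 * ‖v‖ ^ 2
    with hφdef
  have hφ : ∀ s : ℝ, HasDerivAt φ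
      (⟪gradient f (c s), v⟫_ℝ - ⟪gradient f x, v⟫_ℝ + L * s * ‖v‖ ^ 2) s := by
    intro s
    have h2 : HasDerivAt (fun s : ℝ => s * ⟪gradient f x, v⟫_ℝ) ⟪gradient f x, v⟫_ℝ s := by
      simpa using (hasDerivAt_id s).mul_const ⟪gradient f x, v⟫_ℝ
    have h3 : HasDerivAt (fun s : ℝ => L / 2 * s ^ 2 * ‖v‖ ^ 2) (L * s * ‖v‖ ^ 2) s := by
      have := ((hasDerivAt_pow 2 s).const_mul (L / 2)).mul_const (‖v‖ ^ 2)
      refine this.congr_deriv ?_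
      push_cast
      ring
    exact ((hfc s).sub h2).add h3
  have hmono : MonotoneOn φ (Set.Icc (0:ℝ) 1) := by
    apply monotoneOn_of_deriv_nonneg (convex_Icc 0 1)
    · exact fun s _ => ((hφ s).differentiableAt).continuousAt.continuousWithinAt
    · exact fun s _ => ((hφ s).differentiableAt).differentiableWithinAt
    · intro s hs
      rw [interior_Icc] at hs
      rw [(hφ s).deriv]
      have hb : |⟪gradient f (c s) - gradient f x, v⟫_ℝ| ≤ L * s * ‖v‖ ^ 2 := by
        calc |⟪gradient f (c s) - gradient f x, v⟫_ℝ|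
            ≤ ‖gradient f (c s) - gradient f x‖ * ‖v‖ := abs_real_inner_le_norm _ _
          _ ≤ (L * ‖c s - x‖) * ‖v‖ := by
              exact mul_le_mul_of_nonneg_right (hlip _ _) (norm_nonneg _)
          _ = L * s * ‖v‖ ^ 2 := by
              have : c s - x = s • v := by simp [hc]
              rw [this, norm_smul]
              simp [Real.norm_eq_abs, abs_of_pos hs.1]
              ring
      rw [inner_sub_left] at hb
      have := neg_le_of_abs_le hb
      linarith
  have h01 := hmono (Set.mem_Icc.2 ⟨le_refl 0, zero_le_one⟩)
    (Set.mem_Icc.2 ⟨zero_le_one, le_refl 1⟩) zero_le_one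
  have hφ0 : φ 0 = f x := by simp [hφdef, hc]
  have hφ1 : φ 1 = f (x + v) - ⟪gradient f x, v⟫_ℝ + L / 2 * ‖v‖ ^ 2 := by
    simp [hφdef, hc]
  rw [hφ0, hφ1] at h01
  linarith

/-- The model evidence of the nudged model `M₁` dominates the evidence of the original
model `M₀`, for the nudging operator that takes a gradient step of `log g_t` on the set
where `‖∇ log g_t‖ ≥ 2L_t^τ` and is the identity elsewhere. -/
theorem stmt_10 (d T : ℕ) (hT : 1 ≤ T)
    (g : ℕ → EuclideanSpace ℝ (Fin d) → ℝ)
    (m : ℕ → EuclideanSpace ℝ (Fin d) → EuclideanSpace ℝ (Fin d) → ℝ)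
    (m0 : EuclideanSpace ℝ (Fin d) → ℝ)
    (Lg Lτ γ : ℕ → ℝ)
    (hm0 : ∀ x, 0 ≤ m0 x)
    (hgpos : ∀ t, 1 ≤ t → t ≤ T → ∀ x, 0 < g t x)
    (hmpos : ∀ t x x', 0 < m t x x')
    (hdiff : ∀ t, 1 ≤ t → t ≤ T → Differentiable ℝ fun x => Real.log (g t x))
    (hLip : ∀ t, 1 ≤ t → t ≤ T → ∀ x x',
      ‖gradient (fun y => Real.log (g t y)) x -
        gradient (fun y => Real.log (g t y)) x'‖ ≤ Lg t * ‖x - x'‖)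
    (hmLip : ∀ t, 1 ≤ t → t ≤ T → ∀ x x' x'',
      |Real.log (m (t + 1) x x') - Real.log (m (t + 1) x x'')| ≤ Lτ t * ‖x' - x''‖)
    (hγ : ∀ t, 1 ≤ t → t ≤ T → 0 < γ t ∧ γ t ≤ 1 / Lg t)
    (α : ℕ → EuclideanSpace ℝ (Fin d) → EuclideanSpace ℝ (Fin d))
    (hα : ∀ t x, α t x =
      if 2 * Lτ t ≤ ‖gradient (fun y => Real.log (g t y)) x‖ then
        x + γ t • gradient (fun y => Real.log (g t y)) x
      else x) :
    (∫⁻ x : Fin (T + 1) → EuclideanSpace ℝ (Fin d),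
        ENNReal.ofReal ((∏ t ∈ Icc 1 T, g t (x (t : Fin (T + 1)))) *
          (∏ t ∈ Icc 1 (T - 1), m (t + 1) (x ((t + 1 : ℕ) : Fin (T + 1))) (x (t : Fin (T + 1)))) *
          m 1 (x 1) (x 0) * m0 (x 0)))
      ≤
    ∫⁻ x : Fin (T + 1) → EuclideanSpace ℝ (Fin d),
        ENNReal.ofReal ((∏ t ∈ Icc 1 T, g t (α t (x (t : Fin (T + 1))))) *
          (∏ t ∈ Icc 1 (T - 1),
            m (t + 1) (x ((t + 1 : ℕ) : Fin (T + 1))) (α t (x (t : Fin (T + 1))))) *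
          m 1 (x 1) (x 0) * m0 (x 0)) := by
  have hstep : ∀ t, 1 ≤ t → t ≤ T → ∀ x : EuclideanSpace ℝ (Fin d),
      α t x = x ∨
      (Real.log (g t x) ≤ Real.log (g t (α t x)) ∧
       Real.log (g t x) + Lτ t * ‖α t x - x‖ ≤ Real.log (g t (α t x))) := by
    intro t ht1 ht2 x
    by_cases heq : α t x = x
    · exact Or.inl heq
    · right
      set G : EuclideanSpace ℝ (Fin d) :=
        gradient (fun y => Real.log (g t y)) x with hG
      have hcond : 2 * Lτ t ≤ ‖G‖ := by
        by_contra hc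
        exact heq (by rw [hα t x, if_neg hc])
      have hαx : α t x = x + γ t • G := by rw [hα t x, if_pos hcond]
      have hne : γ t • G ≠ 0 := by
        intro h0
        exact heq (by rw [hαx, h0, add_zero])
      have hγpos : 0 < γ t := (hγ t ht1 ht2).1
      have hn : 0 < ‖G‖ := by
        rcases smul_ne_zero_iff.1 hne with ⟨-, hG0⟩
        exact norm_pos_iff.2 hG0
      have hnormd : ‖α t x - x‖ = γ t * ‖G‖ := by
        rw [hαx, add_sub_cancel_left, norm_smul, Real.norm_eq_abs, abs_of_pos hγpos]
      have hLgnn : 0 ≤ Lg t := by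
        have h1 := hLip t ht1 ht2 x (α t x)
        have h2 : 0 < ‖x - α t x‖ := by
          rw [norm_sub_rev, hnormd]
          positivity
        nlinarith [norm_nonneg (gradient (fun y => Real.log (g t y)) x -
          gradient (fun y => Real.log (g t y)) (α t x))]
      have hLgpos : 0 < Lg t := by
        rcases hLgnn.lt_or_eq with h | h
        · exact h
        · exfalso
          have := (hγ t ht1 ht2).2
          rw [← h] at this
          simp at this
          linarith
      have hγL : γ t * Lg t ≤ 1 := by
        have := (hγ t ht1 ht2).2
        rw [le_div_iff₀ hLgpos] at this
        linarith
      have hdes := descent_aux (hdiff t ht1 ht2) (hLip t ht1 ht2) x (γ t • G)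
      rw [← hαx] at hdes
      have hip : ⟪G, γ t • G⟫_ℝ = γ t * ‖G‖ ^ 2 := by
        rw [real_inner_smul_right, real_inner_self_eq_norm_sq]
      have hns : ‖γ t • G‖ = γ t * ‖G‖ := by
        rw [norm_smul, Real.norm_eq_abs, abs_of_pos hγpos]
      rw [hip, hns] at hdes
      constructor
      · nlinarith [sq_nonneg ‖G‖, mul_pos hγpos (mul_pos hn hn)]
      · rw [hnormd]
        nlinarith [mul_pos hγpos hn, mul_pos (mul_pos hγpos hn) hn]
  -- pointwise factor inequalities
  have hfac : ∀ t, 1 ≤ t → t ≤ T → ∀ x x' : EuclideanSpace ℝ (Fin d),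
      g t x * m (t + 1) x' x ≤ g t (α t x) * m (t + 1) x' (α t x) := by
    intro t ht1 ht2 x x'
    rcases hstep t ht1 ht2 x with heq | ⟨-, hlog⟩
    · rw [heq]
    · have hm := hmLip t ht1 ht2 x' (α t x) x
      have hm' : Real.log (m (t + 1) x' x) - Lτ t * ‖α t x - x‖
          ≤ Real.log (m (t + 1) x' (α t x)) := by
        have := abs_le.1 hm
        linarith [this.1]
      have hsum : Real.log (g t x) + Real.log (m (t + 1) x' x)
          ≤ Real.log (g t (α t x)) + Real.log (m (t + 1) x' (α t x)) := by linarith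
      have e1 : g t x * m (t + 1) x' x =
          Real.exp (Real.log (g t x) + Real.log (m (t + 1) x' x)) := by
        rw [Real.exp_add, Real.exp_log (hgpos t ht1 ht2 x), Real.exp_log (hmpos _ _ _)]
      have e2 : g t (α t x) * m (t + 1) x' (α t x) =
          Real.exp (Real.log (g t (α t x)) + Real.log (m (t + 1) x' (α t x))) := by
        rw [Real.exp_add, Real.exp_log (hgpos t ht1 ht2 _), Real.exp_log (hmpos _ _ _)]
      rw [e1, e2]
      exact Real.exp_le_exp.2 hsum
  have hgmono : ∀ t, 1 ≤ t → t ≤ T → ∀ x : EuclideanSpace ℝ (Fin d),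
      g t x ≤ g t (α t x) := by
    intro t ht1 ht2 x
    rcases hstep t ht1 ht2 x with heq | ⟨hlog, -⟩
    · rw [heq]
    · calc g t x = Real.exp (Real.log (g t x)) := (Real.exp_log (hgpos t ht1 ht2 x)).symm
        _ ≤ Real.exp (Real.log (g t (α t x))) := Real.exp_le_exp.2 hlog
        _ = g t (α t x) := Real.exp_log (hgpos t ht1 ht2 _)
  -- integral comparison
  obtain ⟨k, rfl⟩ : ∃ k, T = k + 1 := ⟨T - 1, (Nat.succ_pred_eq_of_pos hT).symm⟩
  apply lintegral_mono
  intro x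
  apply ENNReal.ofReal_le_ofReal
  simp only [Nat.add_sub_cancel]
  rw [Finset.prod_Icc_succ_top (Nat.le_add_left 1 k),
    Finset.prod_Icc_succ_top (Nat.le_add_left 1 k)]
  have hmem : ∀ t ∈ Icc 1 k, 1 ≤ t ∧ t ≤ k + 1 := by
    intro t ht
    rcases Finset.mem_Icc.1 ht with ⟨h1, h2⟩
    exact ⟨h1, h2.trans (Nat.le_succ k)⟩
  have h1 : ∏ t ∈ Icc 1 k,
        (g t (x (t : Fin (k + 1 + 1))) *
          m (t + 1) (x ((t + 1 : ℕ) : Fin (k + 1 + 1))) (x (t : Fin (k + 1 + 1))))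
      ≤ ∏ t ∈ Icc 1 k,
        (g t (α t (x (t : Fin (k + 1 + 1)))) *
          m (t + 1) (x ((t + 1 : ℕ) : Fin (k + 1 + 1))) (α t (x (t : Fin (k + 1 + 1))))) := by
    apply Finset.prod_le_prod
    · intro t ht
      exact mul_nonneg (hgpos t (hmem t ht).1 (hmem t ht).2 _).le (hmpos _ _ _).le
    · intro t ht
      exact hfac t (hmem t ht).1 (hmem t ht).2 _ _
  have h2 : g (k + 1) (x ((k + 1 : ℕ) : Fin (k + 1 + 1)))
      ≤ g (k + 1) (α (k + 1) (x ((k + 1 : ℕ) : Fin (k + 1 + 1)))) :=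
    hgmono (k + 1) (Nat.le_add_left 1 k) le_rfl _
  rw [Finset.prod_mul_distrib, Finset.prod_mul_distrib] at h1
  have hAnn : 0 ≤ ∏ t ∈ Icc 1 k,
      m (t + 1) (x ((t + 1 : ℕ) : Fin (k + 1 + 1))) (x (t : Fin (k + 1 + 1))) :=
    Finset.prod_nonneg fun t _ => (hmpos _ _ _).le
  have hBnn : 0 ≤ ∏ t ∈ Icc 1 k, g t (x (t : Fin (k + 1 + 1))) :=
    Finset.prod_nonneg fun t ht => (hgpos t (hmem t ht).1 (hmem t ht).2 _).le
  have h3 : (∏ t ∈ Icc 1 k, g t (x (t : Fin (k + 1 + 1)))) *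
        (∏ t ∈ Icc 1 k,
          m (t + 1) (x ((t + 1 : ℕ) : Fin (k + 1 + 1))) (x (t : Fin (k + 1 + 1)))) *
        g (k + 1) (x ((k + 1 : ℕ) : Fin (k + 1 + 1)))
      ≤ (∏ t ∈ Icc 1 k, g t (α t (x (t : Fin (k + 1 + 1))))) *
        (∏ t ∈ Icc 1 k,
          m (t + 1) (x ((t + 1 : ℕ) : Fin (k + 1 + 1))) (α t (x (t : Fin (k + 1 + 1))))) *
        g (k + 1) (α (k + 1) (x ((k + 1 : ℕ) : Fin (k + 1 + 1)))) :=
    mul_le_mul h1 h2 (hgpos (k + 1) (Nat.le_add_left 1 k) le_rfl _).le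
      ((mul_nonneg hBnn hAnn).trans h1)
  have hc : 0 ≤ m 1 (x 1) (x 0) * m0 (x 0) := mul_nonneg (hmpos _ _ _).le (hm0 _)
  nlinarith [mul_le_mul_of_nonneg_right h3 hc]
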